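/- For real x with |x| < 1, ∫₀^π θ sin³θ · ((1 + x cos θ)^{1/2} + (1 − x cos θ)^{1/2}) dθ = (8π/(105 x³)) · (√(1−x)(2 + x − 8x² + 5x³) + √(1+x)(−2 + x + 8x² + 5x³)) for x ≠ 0. -/

import Mathlib

noncomputable def Faux (x t : ℝ) : ℝ :=
  Real.sqrt t * ((2/3)*(x^2-1)*t + (4/5)*t^2 - (2/7)*t^3)

lemma hasDerivAt_Faux (x t : ℝ) (ht : 0 < t) :
    HasDerivAt (Faux x) (Real.sqrt t * ((x^2-1) + 2*t - t^2)) t := by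
  have hs := Real.hasDerivAt_sqrt (ne_of_gt ht)
  have hp : HasDerivAt (fun t : ℝ => (2/3)*(x^2-1)*t + (4/5)*t^2 - (2/7)*t^3)
      ((2/3)*(x^2-1) + (8/5)*t - (6/7)*t^2) t := by
    have := (((hasDerivAt_id t).const_mul ((2:ℝ)/3*(x^2-1))).add
      ((hasDerivAt_pow 2 t).const_mul ((4:ℝ)/5))).sub
      ((hasDerivAt_pow 3 t).const_mul ((2:ℝ)/7))
    exact this.congr_deriv (by ring)
  have h := hs.mul hp
  refine h.congr_deriv ?_
  obtain ⟨s, hs0, rfl⟩ : ∃ s, 0 < s ∧ t = s^2 :=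
    ⟨Real.sqrt t, Real.sqrt_pos.mpr ht, (Real.sq_sqrt ht.le).symm⟩
  rw [Real.sqrt_sq hs0.le]
  field_simp
  ring

-- antiderivative of sin³θ(√(1+x cosθ)+√(1-x cosθ))
lemma hasDerivAt_G (x : ℝ) (hx : |x| < 1) (hx0 : x ≠ 0) (θ : ℝ) :
    HasDerivAt (fun θ => (Faux x (1 - x * Real.cos θ) - Faux x (1 + x * Real.cos θ)) / x^3)
      (Real.sin θ ^ 3 * (Real.sqrt (1 + x * Real.cos θ) + Real.sqrt (1 - x * Real.cos θ))) θ := by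
  have hb : |x * Real.cos θ| < 1 := by
    calc |x * Real.cos θ| = |x| * |Real.cos θ| := abs_mul _ _
    _ ≤ |x| * 1 := by gcongr; exact Real.abs_cos_le_one θ
    _ < 1 := by simpa using hx
  have h1 : 0 < 1 + x * Real.cos θ := by
    have := neg_lt_of_abs_lt hb; linarith
  have h2 : 0 < 1 - x * Real.cos θ := by
    have := lt_of_abs_lt hb; linarith
  have hc1 : HasDerivAt (fun θ => 1 + x * Real.cos θ) (-(x * Real.sin θ)) θ := by
    have := ((Real.hasDerivAt_cos θ).const_mul x).const_add 1
    exact this.congr_deriv (by ring)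
  have hc2 : HasDerivAt (fun θ => 1 - x * Real.cos θ) (x * Real.sin θ) θ := by
    have h := ((Real.hasDerivAt_cos θ).const_mul x).neg.const_add 1
    simp only [sub_eq_add_neg]
    exact h.congr_deriv (by ring)
  have hF1 := (hasDerivAt_Faux x _ h1).comp θ hc1
  have hF2 := (hasDerivAt_Faux x _ h2).comp θ hc2
  have h := (hF2.sub hF1).div_const (x^3)
  refine h.congr_deriv ?_
  have hcos : Real.cos θ ^ 2 = 1 - Real.sin θ ^ 2 := by
    have := Real.sin_sq_add_cos_sq θ; linarith
  field_simp
  ring_nf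
  rw [hcos]
  ring

lemma cont_h (x : ℝ) : Continuous (fun θ : ℝ =>
    Real.sin θ ^ 3 * (Real.sqrt (1 + x * Real.cos θ) + Real.sqrt (1 - x * Real.cos θ))) := by
  fun_prop

theorem stmt_16 (x : ℝ) (hx : |x| < 1) (hx0 : x ≠ 0) :
    ∫ θ in (0:ℝ)..Real.pi,
        θ * Real.sin θ ^ 3 *
          (Real.sqrt (1 + x * Real.cos θ) + Real.sqrt (1 - x * Real.cos θ))
      = 8 * Real.pi / (105 * x ^ 3) *
        (Real.sqrt (1 - x) * (2 + x - 8 * x ^ 2 + 5 * x ^ 3) +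
          Real.sqrt (1 + x) * (-2 + x + 8 * x ^ 2 + 5 * x ^ 3)) := by
  set h : ℝ → ℝ := fun θ =>
    Real.sin θ ^ 3 * (Real.sqrt (1 + x * Real.cos θ) + Real.sqrt (1 - x * Real.cos θ)) with hh
  have hsymm : ∀ θ, h (Real.pi - θ) = h θ := by
    intro θ
    simp only [hh, Real.sin_pi_sub, Real.cos_pi_sub]
    ring_nf
  set I := ∫ θ in (0:ℝ)..Real.pi, θ * h θ with hI
  set J := ∫ θ in (0:ℝ)..Real.pi, h θ with hJ
  -- J via FTC
  have hJval : J = 2 * (Faux x (1+x) - Faux x (1-x)) / x^3 := by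
    have := intervalIntegral.integral_eq_sub_of_hasDerivAt
      (f := fun θ => (Faux x (1 - x * Real.cos θ) - Faux x (1 + x * Real.cos θ)) / x^3)
      (fun θ _ => hasDerivAt_G x hx hx0 θ)
      ((cont_h x).intervalIntegrable 0 Real.pi)
    rw [hJ, this]
    simp [Real.cos_pi, Real.cos_zero]
    ring
  -- symmetry: 2I = π J
  have hint1 : IntervalIntegrable (fun θ => θ * h θ) MeasureTheory.volume 0 Real.pi :=
    (continuous_id.mul (cont_h x)).intervalIntegrable 0 Real.pi
  have hint2 : IntervalIntegrable h MeasureTheory.volume 0 Real.pi :=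
    (cont_h x).intervalIntegrable 0 Real.pi
  have hflip : I = ∫ θ in (0:ℝ)..Real.pi, (Real.pi - θ) * h θ := by
    have := intervalIntegral.integral_comp_sub_left (fun s => s * h s) Real.pi
      (a := 0) (b := Real.pi)
    simp only [sub_zero, sub_self] at this
    rw [hI, ← this]
    congr 1
    ext θ
    rw [hsymm]
  have hsplit : (∫ θ in (0:ℝ)..Real.pi, (Real.pi - θ) * h θ) = Real.pi * J - I := by
    rw [show (fun θ => (Real.pi - θ) * h θ) = fun θ => Real.pi * h θ - θ * h θ
      from funext fun θ => by ring]
    rw [intervalIntegral.integral_sub (hint2.const_mul Real.pi) hint1,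
      intervalIntegral.integral_const_mul]
  have h2I : 2 * I = Real.pi * J := by
    rw [hsplit] at hflip; linarith
  have hIval : I = Real.pi * (Faux x (1+x) - Faux x (1-x)) / x^3 := by
    rw [hJval] at h2I
    field_simp at h2I ⊢
    linarith
  -- final algebra
  have hLHS : (∫ θ in (0:ℝ)..Real.pi, θ * Real.sin θ ^ 3 *
      (Real.sqrt (1 + x * Real.cos θ) + Real.sqrt (1 - x * Real.cos θ))) = I := by
    rw [hI]; congr 1; ext θ; rw [hh]; ring
  rw [hLHS, hIval]
  rw [Faux, Faux]
  have hx3 : x^3 ≠ 0 := pow_ne_zero 3 hx0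
  field_simp
  ring
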